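/- For any N×m matrix D with unit-norm columns and m > N, the coherence satisfies μ(D) ≥ √((m−N)/(N(m−1))). -/

import Mathlib

open Finset Matrix Complex

theorem stmt7 {N m : ℕ} (hN : 0 < N) (hm : N < m)
    (d : Fin m → EuclideanSpace ℂ (Fin N))
    (hd : ∀ ℓ, ‖d ℓ‖ = 1)
    (μ : ℝ)
    (hμ : ∀ ℓ r, ℓ ≠ r → ‖(inner ℂ (d ℓ) (d r) : ℂ)‖ ≤ μ) :
    Real.sqrt (((m : ℝ) - N) / (N * ((m : ℝ) - 1))) ≤ μ := by
  classical
  have hm2 : 2 ≤ m := by omega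
  have hμ0 : 0 ≤ μ := by
    refine le_trans (norm_nonneg _) (hμ ⟨0, by omega⟩ ⟨1, by omega⟩ ?_)
    simp [Fin.ext_iff]
  set M : Matrix (Fin N) (Fin m) ℂ := Matrix.of fun i ℓ => d ℓ i with hMdef
  set G : Matrix (Fin m) (Fin m) ℂ := Mᴴ * M with hGdef
  set S : Matrix (Fin N) (Fin N) ℂ := M * Mᴴ with hSdef
  have hG : ∀ ℓ r, G ℓ r = inner ℂ (d ℓ) (d r) := by
    intro ℓ r
    simp [hGdef, hMdef, Matrix.mul_apply, Matrix.conjTranspose_apply, PiLp.inner_apply,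
      RCLike.inner_apply, mul_comm]
  have hGh : G.IsHermitian := Matrix.isHermitian_conjTranspose_mul_self M
  have hSh : S.IsHermitian := Matrix.isHermitian_mul_conjTranspose_self M
  have htr : (G * G).trace = (S * S).trace := by
    rw [hGdef, hSdef, Matrix.mul_assoc, Matrix.trace_mul_comm, Matrix.mul_assoc,
      Matrix.mul_assoc, ← Matrix.mul_assoc]
  -- entrywise expansions
  have keynorm : ∀ (k : ℕ) (A : Matrix (Fin k) (Fin k) ℂ), A.IsHermitian →
      ((A * A).trace).re = ∑ i, ∑ j, ‖A i j‖ ^ 2 := by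
    intro k A hA
    have h1 : (A * A).trace = ∑ i, ∑ j, (A i j * (starRingEnd ℂ) (A i j)) := by
      simp only [Matrix.trace, Matrix.diag, Matrix.mul_apply]
      refine Finset.sum_congr rfl fun i _ => Finset.sum_congr rfl fun j _ => ?_
      have : A j i = (starRingEnd ℂ) (A i j) := by
        conv_lhs => rw [← hA]
        simp [Matrix.conjTranspose_apply]
      rw [this]
    rw [h1, Complex.re_sum]
    refine Finset.sum_congr rfl fun i _ => ?_
    rw [Complex.re_sum]
    refine Finset.sum_congr rfl fun j _ => ?_
    rw [Complex.mul_conj]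
    norm_cast
    simp [Complex.normSq_eq_norm_sq]
  have hL : ((G * G).trace).re = ∑ ℓ, ∑ r, ‖(inner ℂ (d ℓ) (d r) : ℂ)‖ ^ 2 := by
    rw [keynorm m G hGh]
    exact Finset.sum_congr rfl fun ℓ _ => Finset.sum_congr rfl fun r _ => by rw [hG]
  have hR : ((S * S).trace).re = ∑ i, ∑ j, ‖S i j‖ ^ 2 := keynorm N S hSh
  -- diagonal of S sums to m
  have hdiag : ∑ i, (S i i).re = (m : ℝ) := by
    have h1 : ∀ i, (S i i).re = ∑ ℓ, ‖d ℓ i‖ ^ 2 := by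
      intro i
      rw [hSdef]
      simp only [Matrix.mul_apply, Matrix.conjTranspose_apply, hMdef, Matrix.of_apply]
      rw [Complex.re_sum]
      refine Finset.sum_congr rfl fun ℓ _ => ?_
      rw [Complex.star_def, Complex.mul_conj]
      norm_cast
      simp [Complex.normSq_eq_norm_sq]
    calc ∑ i, (S i i).re = ∑ i, ∑ ℓ, ‖d ℓ i‖ ^ 2 := by simp [h1]
      _ = ∑ ℓ, ∑ i, ‖d ℓ i‖ ^ 2 := Finset.sum_comm
      _ = ∑ ℓ : Fin m, (1 : ℝ) := by
          refine Finset.sum_congr rfl fun ℓ _ => ?_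
          rw [← PiLp.norm_sq_eq_of_L2, hd ℓ]; norm_num
      _ = (m : ℝ) := by simp
  -- Cauchy–Schwarz: m^2 ≤ N * ∑ ‖S i i‖²  ≤ N * tr(S*S).re
  have hCS : (m : ℝ) ^ 2 ≤ (N : ℝ) * ((S * S).trace).re := by
    have h1 : (∑ i, (S i i).re) ^ 2 ≤ (∑ _i : Fin N, (1:ℝ) ^ 2) * ∑ i, ((S i i).re) ^ 2 := by
      calc (∑ i, (S i i).re) ^ 2 = (∑ i, (1:ℝ) * (S i i).re) ^ 2 := by simp
        _ ≤ (∑ _i : Fin N, (1:ℝ)^2) * ∑ i, ((S i i).re)^2 :=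
            Finset.sum_mul_sq_le_sq_mul_sq Finset.univ _ _
    have h2 : ∑ i, ((S i i).re) ^ 2 ≤ ((S * S).trace).re := by
      rw [hR]
      refine Finset.sum_le_sum fun i _ => ?_
      calc ((S i i).re) ^ 2 ≤ ‖S i i‖ ^ 2 := by
            have h := Complex.abs_re_le_norm (S i i)
            rw [← _root_.sq_abs ((S i i).re)]
            exact pow_le_pow_left₀ (abs_nonneg _) h 2
        _ ≤ ∑ j, ‖S i j‖ ^ 2 :=
            Finset.single_le_sum (f := fun j => ‖S i j‖ ^ 2)
              (fun j _ => sq_nonneg _) (Finset.mem_univ i)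
    calc (m:ℝ)^2 = (∑ i, (S i i).re) ^ 2 := by rw [hdiag]
      _ ≤ (∑ _i : Fin N, (1:ℝ)^2) * ∑ i, ((S i i).re)^2 := h1
      _ = (N:ℝ) * ∑ i, ((S i i).re)^2 := by simp
      _ ≤ (N:ℝ) * ((S * S).trace).re := by
          exact mul_le_mul_of_nonneg_left h2 (by positivity)
  -- upper bound on tr(G*G).re
  have hUB : ((G * G).trace).re ≤ (m : ℝ) + (m : ℝ) * ((m : ℝ) - 1) * μ ^ 2 := by
    rw [hL]
    have hterm : ∀ ℓ : Fin m, ∑ r, ‖(inner ℂ (d ℓ) (d r) : ℂ)‖ ^ 2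
        ≤ 1 + ((m : ℝ) - 1) * μ ^ 2 := by
      intro ℓ
      rw [← Finset.add_sum_erase _ _ (Finset.mem_univ ℓ)]
      have hdg : ‖(inner ℂ (d ℓ) (d ℓ) : ℂ)‖ ^ 2 = 1 := by
        rw [inner_self_eq_norm_sq_to_K, hd ℓ]
        norm_num
      rw [hdg]
      gcongr 1 + ?_
      calc ∑ r ∈ Finset.univ.erase ℓ, ‖(inner ℂ (d ℓ) (d r) : ℂ)‖ ^ 2
          ≤ ∑ _r ∈ Finset.univ.erase ℓ, μ ^ 2 := by
            refine Finset.sum_le_sum fun r hr => ?_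
            have hne : ℓ ≠ r := (Finset.ne_of_mem_erase hr).symm
            have := hμ ℓ r hne
            nlinarith [norm_nonneg (inner ℂ (d ℓ) (d r) : ℂ)]
        _ = ((m : ℝ) - 1) * μ ^ 2 := by
            rw [Finset.sum_const, Finset.card_erase_of_mem (Finset.mem_univ ℓ)]
            simp only [Finset.card_univ, Fintype.card_fin, nsmul_eq_mul]
            have : ((m - 1 : ℕ) : ℝ) = (m : ℝ) - 1 := by
              push_cast [Nat.cast_sub (by omega : 1 ≤ m)]; ring
            rw [this]
    calc ∑ ℓ, ∑ r, ‖(inner ℂ (d ℓ) (d r) : ℂ)‖ ^ 2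
        ≤ ∑ _ℓ : Fin m, (1 + ((m : ℝ) - 1) * μ ^ 2) :=
          Finset.sum_le_sum fun ℓ _ => hterm ℓ
      _ = (m : ℝ) + (m : ℝ) * ((m : ℝ) - 1) * μ ^ 2 := by
          rw [Finset.sum_const]; simp [Finset.card_univ]; ring
  -- combine
  have key : (m : ℝ) ^ 2 ≤ (N : ℝ) * ((m : ℝ) + (m : ℝ) * ((m : ℝ) - 1) * μ ^ 2) := by
    have := hCS
    rw [← htr] at this
    exact le_trans this (mul_le_mul_of_nonneg_left hUB (by positivity))
  have hNr : (0:ℝ) < N := by exact_mod_cast hN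
  have hNr1 : (1:ℝ) ≤ N := by exact_mod_cast hN
  have hmr : (N:ℝ) < m := by exact_mod_cast hm
  have hm0 : (0:ℝ) < m := by positivity
  have hfrac : ((m : ℝ) - N) / ((N : ℝ) * ((m : ℝ) - 1)) ≤ μ ^ 2 := by
    rw [div_le_iff₀ (by nlinarith)]
    nlinarith [key, mul_pos hNr hm0]
  calc Real.sqrt (((m : ℝ) - N) / (N * ((m : ℝ) - 1))) ≤ Real.sqrt (μ ^ 2) :=
        Real.sqrt_le_sqrt hfrac
    _ = μ := Real.sqrt_sq hμ0
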